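/- If a real-analytic function f : ℝ → ℝ satisfies f(p) + f(q) = f(p+q) for all (p,q) in some nonempty open subset U of ℝ², then f is ℝ-linear: f(p) = f(1)·p for all p ∈ ℝ. -/

import Mathlib

/-- Analyticity propagation: a real-analytic function that is additive on a
nonempty open subset of `ℝ × ℝ` is globally linear. -/
theorem stmt_8 (f : ℝ → ℝ) (hf : AnalyticOn ℝ f Set.univ)
    (U : Set (ℝ × ℝ)) (hU : IsOpen U) (hUne : U.Nonempty)
    (hadd : ∀ pq ∈ U, f pq.1 + f pq.2 = f (pq.1 + pq.2)) :
    ∀ p : ℝ, f p = f 1 * p := by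
  rw [analyticOn_univ] at hf
  obtain ⟨⟨p₀, q₀⟩, hpq⟩ := hUne
  obtain ⟨ε, hε, hball⟩ := Metric.isOpen_iff.1 hU _ hpq
  have hmem : ∀ p q : ℝ, dist p p₀ < ε → dist q q₀ < ε → (p, q) ∈ U := by
    intro p q hp hq
    exact hball (by simp [Metric.mem_ball, Prod.dist_eq, hp, hq])
  -- Step A: for q near q₀, additivity holds for all p
  have stepA : ∀ q : ℝ, dist q q₀ < ε → ∀ p : ℝ, f (p + q) = f p + f q := by
    intro q hq
    have h1 : AnalyticOnNhd ℝ (fun p => f (p + q)) Set.univ := by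
      intro x _
      have hin : AnalyticAt ℝ (fun p : ℝ => p + q) x := analyticAt_id.add analyticAt_const
      exact AnalyticAt.comp_of_eq (f := fun p : ℝ => p + q) (hf (x + q) trivial) hin (by simp)
    have h2 : AnalyticOnNhd ℝ (fun p => f p + f q) Set.univ := fun x _ =>
      (hf x trivial).add analyticAt_const
    have heq : (fun p => f (p + q)) =ᶠ[nhds p₀] (fun p => f p + f q) := by
      filter_upwards [Metric.ball_mem_nhds p₀ hε] with p hp
      exact ((hadd (p, q) (hmem p q (by simpa using hp) hq))).symm
    have := h1.eqOn_of_preconnected_of_eventuallyEq h2 isPreconnected_univ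
      (Set.mem_univ p₀) heq
    intro p; exact this (Set.mem_univ p)
  -- Step B: additivity holds for all p, q
  have key : ∀ p q : ℝ, f (p + q) = f p + f q := by
    intro p
    have h1 : AnalyticOnNhd ℝ (fun q => f (p + q)) Set.univ := by
      intro x _
      have hin : AnalyticAt ℝ (fun q : ℝ => p + q) x := analyticAt_const.add analyticAt_id
      exact AnalyticAt.comp_of_eq (f := fun q : ℝ => p + q) (hf (p + x) trivial) hin (by simp)
    have h2 : AnalyticOnNhd ℝ (fun q => f p + f q) Set.univ := fun x _ =>
      analyticAt_const.add (hf x trivial)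
    have heq : (fun q => f (p + q)) =ᶠ[nhds q₀] (fun q => f p + f q) := by
      filter_upwards [Metric.ball_mem_nhds q₀ hε] with q hq
      exact stepA q (by simpa using hq) p
    have := h1.eqOn_of_preconnected_of_eventuallyEq h2 isPreconnected_univ
      (Set.mem_univ q₀) heq
    intro q; exact this (Set.mem_univ q)
  have hzero : f 0 = 0 := by
    have := key 0 0; simp at this; linarith
  let F : ℝ →+ ℝ :=
    { toFun := f, map_zero' := hzero, map_add' := fun a b => key a b }
  have hcont : Continuous f := by
    rw [← continuousOn_univ]
    exact (hf.continuousOn)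
  intro p
  have h := (F.toRealLinearMap hcont).map_smul p 1
  simp only [F.coe_toRealLinearMap hcont] at h
  simp only [F, AddMonoidHom.coe_mk, ZeroHom.coe_mk] at h
  simpa [mul_comm] using h
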